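/- Let T = [a1, …, an] be a nonempty list of integers with all ai ≥ 2, and let ld_j(T) = (d(T_{<j}) + d(T_{>j}))/d(T) be the log discrepancy of the j-th entry, where d is the tridiagonal discriminant. Then 0 < ld_j(T) ≤ 1 for every j, and ld_j(T) = 1 for some j if and only if all entries of T equal 2 (in which case ld_j(T) = 1 for every j). -/

import Mathlib

/-- The tridiagonal matrix with diagonal entries given by the list `T`
and entries `-1` on the sub- and super-diagonal. -/
def tridiagMatrix (T : List ℤ) : Matrix (Fin T.length) (Fin T.length) ℤ :=
  Matrix.of fun i j =>
    if i = j then T.get i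
    else if (i : ℕ) + 1 = (j : ℕ) ∨ (j : ℕ) + 1 = (i : ℕ) then -1 else 0

/-- The discriminant of a chain `T`: the determinant of the associated tridiagonal
matrix (so the discriminant of the empty list is `1`). -/
def chainDisc (T : List ℤ) : ℤ := (tridiagMatrix T).det

/-- The log discrepancy of the `j`-th entry (1-indexed) of the chain `T`:
`ld_j(T) = (d(T_{<j}) + d(T_{>j})) / d(T)`, where `T_{<j}` is the prefix before
position `j` and `T_{>j}` the suffix after position `j`. -/
def chainLd (T : List ℤ) (j : ℕ) : ℚ :=
  ((chainDisc (T.take (j - 1)) : ℚ) + (chainDisc (T.drop j) : ℚ)) / (chainDisc T : ℚ)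

/-! ### Auxiliary: nat-indexed tridiagonal determinants -/

def triM (n : ℕ) (g : ℕ → ℤ) : Matrix (Fin n) (Fin n) ℤ :=
  Matrix.of fun i j : Fin n =>
    if (i : ℕ) = (j : ℕ) then g i
    else if (i : ℕ) + 1 = (j : ℕ) ∨ (j : ℕ) + 1 = (i : ℕ) then -1 else 0

def triD (n : ℕ) (g : ℕ → ℤ) : ℤ := (triM n g).det

theorem triM_apply (n : ℕ) (g : ℕ → ℤ) (i j : Fin n) :
    triM n g i j = if (i : ℕ) = (j : ℕ) then g i
      else if (i : ℕ) + 1 = (j : ℕ) ∨ (j : ℕ) + 1 = (i : ℕ) then -1 else 0 := rfl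

theorem triD_eq (n : ℕ) (g : ℕ → ℤ) : triD n g = (triM n g).det := rfl

theorem minor_det (n : ℕ) (g : ℕ → ℤ) :
    ((triM (n + 2) g).submatrix Fin.succ ((1 : Fin (n + 2)).succAbove)).det
      = - triD n (fun k => g (k + 2)) := by
  set N : Matrix (Fin (n + 1)) (Fin (n + 1)) ℤ :=
    (triM (n + 2) g).submatrix Fin.succ ((1 : Fin (n + 2)).succAbove) with hN
  have h1 : (1 : Fin (n + 2)).succAbove 0 = 0 := by
    rw [Fin.succAbove_of_castSucc_lt]
    · exact Fin.castSucc_zero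
    · simp [Fin.lt_iff_val_lt_val]
  have hdet : N.det = ∑ i : Fin (n + 1),
      (-1) ^ (i : ℕ) * N i 0 * (N.submatrix i.succAbove Fin.succ).det :=
    Matrix.det_succ_column_zero N
  rw [hdet, Fin.sum_univ_succ]
  have hzero : ∀ i : Fin n, N i.succ 0 = 0 := by
    intro i
    rw [hN, Matrix.submatrix_apply, h1, triM_apply]
    simp only [Fin.val_succ, Fin.val_zero]
    simp
  have hrest : ∑ i : Fin n,
      (-1) ^ ((i.succ : Fin (n + 1)) : ℕ) * N i.succ 0 *
        (N.submatrix i.succ.succAbove Fin.succ).det = 0 := by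
    apply Finset.sum_eq_zero
    intro i _
    rw [hzero i]; ring
  rw [hrest, add_zero]
  have hN00 : N 0 0 = -1 := by
    rw [hN, Matrix.submatrix_apply, h1, triM_apply]
    norm_num
  have hsub : N.submatrix (0 : Fin (n + 1)).succAbove Fin.succ = triM n (fun k => g (k + 2)) := by
    have e2 : ∀ j : Fin n, (1 : Fin (n + 2)).succAbove j.succ = j.succ.succ := by
      intro j
      rw [Fin.succAbove_of_le_castSucc]
      simp [Fin.le_iff_val_le_val]
    ext i j
    simp only [Matrix.submatrix_apply, hN]
    rw [Fin.succAbove_zero, e2, triM_apply, triM_apply]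
    simp only [Fin.val_succ]
    rcases eq_or_ne (i : ℕ) (j : ℕ) with h | h
    · rw [if_pos (by omega), if_pos h]
    · rw [if_neg (by omega), if_neg h]
      congr 1
      simp only [eq_iff_iff]; omega
  rw [hN00, hsub, ← triD_eq]
  simp

theorem triD_rec (n : ℕ) (g : ℕ → ℤ) :
    triD (n + 2) g = g 0 * triD (n + 1) (fun k => g (k + 1)) - triD n (fun k => g (k + 2)) := by
  have hdet : triD (n + 2) g = ∑ j : Fin (n + 2),
      (-1) ^ (j : ℕ) * triM (n + 2) g 0 j *
        ((triM (n + 2) g).submatrix Fin.succ j.succAbove).det :=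
    Matrix.det_succ_row_zero (triM (n + 2) g)
  rw [hdet, Fin.sum_univ_succ, Fin.sum_univ_succ]
  have hzero : ∀ j : Fin n, triM (n + 2) g 0 j.succ.succ = 0 := by
    intro j
    rw [triM_apply]
    simp only [Fin.val_succ, Fin.val_zero]
    simp
  have hrest : ∑ j : Fin n,
      (-1) ^ ((j.succ.succ : Fin (n + 2)) : ℕ) * triM (n + 2) g 0 j.succ.succ *
        ((triM (n + 2) g).submatrix Fin.succ j.succ.succ.succAbove).det = 0 := by
    apply Finset.sum_eq_zero
    intro j _
    rw [hzero j]; ring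
  rw [hrest, add_zero]
  have h00 : triM (n + 2) g 0 0 = g 0 := by rw [triM_apply]; norm_num
  have h01 : triM (n + 2) g 0 ((0 : Fin (n + 1)).succ) = -1 := by
    rw [triM_apply]; norm_num
  have hm0 : ((triM (n + 2) g).submatrix Fin.succ (0 : Fin (n + 2)).succAbove).det
      = triD (n + 1) (fun k => g (k + 1)) := by
    rw [Fin.succAbove_zero]
    have : (triM (n + 2) g).submatrix Fin.succ Fin.succ = triM (n + 1) (fun k => g (k + 1)) := by
      ext i j
      simp only [Matrix.submatrix_apply]
      rw [triM_apply, triM_apply]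
      simp only [Fin.val_succ]
      rcases eq_or_ne (i : ℕ) (j : ℕ) with h | h
      · rw [if_pos (by omega), if_pos h]
      · rw [if_neg (by omega), if_neg h]
        congr 1
        simp only [eq_iff_iff]; omega
    rw [this, ← triD_eq]
  have hm1 : ((triM (n + 2) g).submatrix Fin.succ ((0 : Fin (n + 1)).succ).succAbove).det
      = - triD n (fun k => g (k + 2)) := by
    have h : ((0 : Fin (n + 1)).succ) = (1 : Fin (n + 2)) := rfl
    rw [h, minor_det]
  rw [h00, h01, hm0, hm1]
  simp only [Fin.val_zero, Fin.val_succ, pow_zero, pow_one]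
  ring

/-! ### Basic values and the three-term recursion for `chainDisc` -/

theorem chainDisc_eq_triD (L : List ℤ) :
    chainDisc L = triD L.length (fun k => L.getD k 0) := by
  unfold chainDisc triD tridiagMatrix triM
  congr 1
  ext i j
  simp only [Matrix.of_apply, Fin.ext_iff]
  rcases eq_or_ne (i : ℕ) (j : ℕ) with h | h
  · rw [if_pos h, if_pos h, List.get_eq_getElem, List.getD_eq_getElem _ _ i.isLt]
  · rw [if_neg h, if_neg h]

theorem chainDisc_nil : chainDisc [] = 1 := by
  simp [chainDisc, Matrix.det_fin_zero]

theorem chainDisc_singleton (a : ℤ) : chainDisc [a] = a := by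
  simp [chainDisc, tridiagMatrix, Matrix.det_fin_one]

theorem chainDisc_cons_cons (a b : ℤ) (T : List ℤ) :
    chainDisc (a :: b :: T) = a * chainDisc (b :: T) - chainDisc T := by
  rw [chainDisc_eq_triD (a :: b :: T), chainDisc_eq_triD (b :: T), chainDisc_eq_triD T]
  simp only [List.length_cons]
  rw [show T.length + 1 + 1 = T.length + 2 from rfl, triD_rec]
  simp [List.getD_cons_succ, List.getD_cons_zero]

theorem disc_cons (a : ℤ) (T : List ℤ) (hT : T ≠ []) :
    chainDisc (a :: T) = a * chainDisc T - chainDisc T.tail := by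
  cases T with
  | nil => exact absurd rfl hT
  | cons b T' => rw [chainDisc_cons_cons]; rfl

/-! ### The continuant product identity and reversal symmetry -/

theorem disc_append_aux : ∀ (n : ℕ) (U V : List ℤ), U.length ≤ n → U ≠ [] → V ≠ [] →
    chainDisc (U ++ V)
      = chainDisc U * chainDisc V - chainDisc U.dropLast * chainDisc V.tail := by
  intro n
  induction n with
  | zero =>
    intro U V h hU hV
    cases U with
    | nil => exact absurd rfl hU
    | cons u U' => simp at h
  | succ n ih =>
    intro U V hlen hU hV
    match U with
    | [u] =>
      simp only [List.cons_append, List.nil_append]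
      rw [disc_cons u V hV, chainDisc_singleton]
      simp only [List.dropLast_singleton, chainDisc_nil]
      ring
    | u :: u' :: U'' =>
      have h1 : chainDisc ((u :: u' :: U'') ++ V)
          = u * chainDisc ((u' :: U'') ++ V) - chainDisc (U'' ++ V) := by
        simp only [List.cons_append]
        rw [chainDisc_cons_cons]
      have hlen' : (u' :: U'').length ≤ n := by
        simp only [List.length_cons] at hlen ⊢; omega
      have ih1 := ih (u' :: U'') V hlen' (by simp) hV
      cases U'' with
      | nil =>
        rw [h1, ih1]
        simp only [List.nil_append, List.dropLast_singleton, chainDisc_nil,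
          List.dropLast_cons₂, List.dropLast_singleton]
        rw [chainDisc_cons_cons, chainDisc_singleton, chainDisc_singleton, chainDisc_nil]
        ring
      | cons u'' U3 =>
        have hlen'' : (u'' :: U3).length ≤ n := by
          simp only [List.length_cons] at hlen ⊢; omega
        have ih2 := ih (u'' :: U3) V hlen'' (by simp) hV
        rw [h1, ih1, ih2]
        have hd1 : (u :: u' :: u'' :: U3).dropLast = u :: (u' :: u'' :: U3).dropLast := rfl
        have hd2 : (u' :: u'' :: U3).dropLast = u' :: (u'' :: U3).dropLast := rfl
        rw [hd1, hd2, chainDisc_cons_cons u u' (u'' :: U3),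
          chainDisc_cons_cons u u' ((u'' :: U3).dropLast)]
        ring

theorem disc_append (U V : List ℤ) (hU : U ≠ []) (hV : V ≠ []) :
    chainDisc (U ++ V)
      = chainDisc U * chainDisc V - chainDisc U.dropLast * chainDisc V.tail :=
  disc_append_aux U.length U V le_rfl hU hV

theorem disc_concat (P : List ℤ) (hP : P ≠ []) (a : ℤ) :
    chainDisc (P ++ [a]) = a * chainDisc P - chainDisc P.dropLast := by
  rw [disc_append P [a] hP (by simp), chainDisc_singleton]
  simp only [List.tail_cons, chainDisc_nil]
  ring

theorem reverse_dropLast (T : List ℤ) : T.reverse.dropLast = T.tail.reverse := by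
  have h := List.tail_reverse (l := T.reverse)
  rw [List.reverse_reverse] at h
  rw [h, List.reverse_reverse]

theorem disc_reverse_aux : ∀ (n : ℕ) (l : List ℤ), l.length ≤ n →
    chainDisc l.reverse = chainDisc l := by
  intro n
  induction n with
  | zero =>
    intro l hl
    cases l with
    | nil => rfl
    | cons a T => simp at hl
  | succ n ih =>
    intro l hlen
    cases l with
    | nil => rfl
    | cons a T =>
      cases T with
      | nil => rfl
      | cons b T' =>
        rw [List.reverse_cons, disc_concat _ (by simp) a, reverse_dropLast]
        rw [ih (b :: T') (by simp only [List.length_cons] at hlen ⊢; omega),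
          ih (b :: T').tail (by simp only [List.length_cons, List.tail_cons] at hlen ⊢; omega)]
        rw [disc_cons a (b :: T') (by simp)]

theorem disc_reverse (l : List ℤ) : chainDisc l.reverse = chainDisc l :=
  disc_reverse_aux l.length l le_rfl

/-! ### Inequalities -/

theorem disc_ge (l : List ℤ) (h : ∀ a ∈ l, 2 ≤ a) :
    1 ≤ chainDisc l ∧ (l ≠ [] → chainDisc l.tail + 1 ≤ chainDisc l) := by
  induction l with
  | nil => simp [chainDisc_nil]
  | cons a T ih =>
    have ha : 2 ≤ a := h a (by simp)
    have hT' : ∀ x ∈ T, 2 ≤ x := fun x hx => h x (by simp [hx])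
    obtain ⟨h1, h2⟩ := ih hT'
    cases T with
    | nil =>
      rw [chainDisc_singleton]
      simp only [List.tail_cons, chainDisc_nil]
      omega
    | cons b T' =>
      have h2' := h2 (by simp)
      have hr := chainDisc_cons_cons a b T'
      simp only [List.tail_cons] at h2'
      have t : 0 ≤ (a - 2) * chainDisc (b :: T') := mul_nonneg (by omega) (by omega)
      refine ⟨by nlinarith [t], fun _ => ?_⟩
      simp only [List.tail_cons]
      nlinarith [t]

theorem disc_tail_eq2 (l : List ℤ) (h : ∀ a ∈ l, 2 ≤ a)
    (he : chainDisc l = chainDisc l.tail + 1) : ∀ a ∈ l, a = 2 := by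
  induction l with
  | nil => simp
  | cons a T ih =>
    have ha : 2 ≤ a := h a (by simp)
    have hT' : ∀ x ∈ T, 2 ≤ x := fun x hx => h x (by simp [hx])
    simp only [List.tail_cons] at he
    cases T with
    | nil =>
      rw [chainDisc_singleton, chainDisc_nil] at he
      intro x hx
      simp only [List.mem_singleton] at hx
      omega
    | cons b T' =>
      obtain ⟨h1, h2⟩ := disc_ge (b :: T') hT'
      have h2' := h2 (by simp)
      simp only [List.tail_cons] at h2'
      have hr := chainDisc_cons_cons a b T'
      have hax : a * chainDisc (b :: T') - chainDisc T' = chainDisc (b :: T') + 1 := by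
        linarith [hr, he]
      have ha2 : a ≤ 2 := by
        by_contra hc
        push_neg at hc
        have h3 : (3 : ℤ) ≤ a := by omega
        have := mul_le_mul_of_nonneg_right h3 (by omega : (0 : ℤ) ≤ chainDisc (b :: T'))
        linarith
      have haa : a = 2 := le_antisymm ha2 ha
      subst haa
      have heq : chainDisc (b :: T') = chainDisc T' + 1 := by linarith
      have := ih hT' (by simpa using heq)
      intro x hx
      rcases List.mem_cons.mp hx with rfl | hx
      · rfl
      · exact this x hx

theorem disc_all2_aux : ∀ (n : ℕ) (l : List ℤ), l.length ≤ n → (∀ a ∈ l, a = 2) →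
    chainDisc l = l.length + 1 := by
  intro n
  induction n with
  | zero =>
    intro l hl _
    cases l with
    | nil => simp [chainDisc_nil]
    | cons a T => simp at hl
  | succ n ih =>
    intro l hl h
    cases l with
    | nil => simp [chainDisc_nil]
    | cons a T =>
      have ha : a = 2 := h a (by simp)
      have hT' : ∀ x ∈ T, x = 2 := fun x hx => h x (by simp [hx])
      cases T with
      | nil => simp [chainDisc_singleton, ha]
      | cons b T' =>
        have hr := chainDisc_cons_cons a b T'
        have h1 : chainDisc (b :: T') = (b :: T').length + 1 :=
          ih (b :: T') (by simp only [List.length_cons] at hl ⊢; omega) hT'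
        have h2 : chainDisc T' = T'.length + 1 :=
          ih T' (by simp only [List.length_cons] at hl ⊢; omega)
            (fun x hx => hT' x (by simp [hx]))
        rw [hr, h1, h2, ha]
        simp only [List.length_cons]
        push_cast
        ring

theorem disc_all2 (l : List ℤ) (h : ∀ a ∈ l, a = 2) :
    chainDisc l = l.length + 1 :=
  disc_all2_aux l.length l le_rfl h

theorem disc_dropLast_le (l : List ℤ) (hl : l ≠ []) (h : ∀ a ∈ l, 2 ≤ a) :
    chainDisc l.dropLast + 1 ≤ chainDisc l := by
  have h' : ∀ a ∈ l.reverse, 2 ≤ a := fun a ha => h a (List.mem_reverse.mp ha)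
  have hrl : l.reverse ≠ [] := by simpa using hl
  have hle := (disc_ge l.reverse h').2 hrl
  rw [List.tail_reverse, disc_reverse, disc_reverse] at hle
  exact hle

theorem disc_dropLast_eq2 (l : List ℤ) (h : ∀ a ∈ l, 2 ≤ a)
    (he : chainDisc l = chainDisc l.dropLast + 1) : ∀ a ∈ l, a = 2 := by
  have h' : ∀ a ∈ l.reverse, 2 ≤ a := fun a ha => h a (List.mem_reverse.mp ha)
  have he' : chainDisc l.reverse = chainDisc l.reverse.tail + 1 := by
    rw [List.tail_reverse, disc_reverse, disc_reverse]
    exact he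
  have := disc_tail_eq2 l.reverse h' he'
  intro a ha
  exact this a (List.mem_reverse.mpr ha)

/-! ### The splitting inequality -/

theorem disc_split (P Q : List ℤ) (a : ℤ) (hP : ∀ x ∈ P, 2 ≤ x) (hQ : ∀ x ∈ Q, 2 ≤ x)
    (ha : 2 ≤ a) :
    chainDisc P + chainDisc Q ≤ chainDisc (P ++ a :: Q) ∧
    (chainDisc (P ++ a :: Q) = chainDisc P + chainDisc Q →
      ((∀ x ∈ P, x = 2) ∧ a = 2 ∧ (∀ x ∈ Q, x = 2))) := by
  rcases eq_or_ne P [] with hP0 | hP0 <;> rcases eq_or_ne Q [] with hQ0 | hQ0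
  · subst hP0; subst hQ0
    simp only [List.nil_append, chainDisc_singleton, chainDisc_nil]
    refine ⟨by omega, fun he => ⟨by simp, by omega, by simp⟩⟩
  · subst hP0
    simp only [List.nil_append, chainDisc_nil]
    obtain ⟨h1, h2⟩ := disc_ge Q hQ
    have h2' := h2 hQ0
    have hr := disc_cons a Q hQ0
    constructor
    · nlinarith
    · intro he
      have ha2 : a ≤ 2 := by nlinarith
      have haa : a = 2 := le_antisymm ha2 ha
      subst haa
      refine ⟨by simp, rfl, ?_⟩
      apply disc_tail_eq2 Q hQ
      omega
  · subst hQ0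
    have hl : P ++ a :: [] = P ++ [a] := rfl
    rw [hl]
    obtain ⟨h1, _⟩ := disc_ge P hP
    have h2' := disc_dropLast_le P hP0 hP
    have hr := disc_concat P hP0 a
    rw [chainDisc_nil]
    constructor
    · nlinarith
    · intro he
      have ha2 : a ≤ 2 := by nlinarith
      have haa : a = 2 := le_antisymm ha2 ha
      subst haa
      refine ⟨?_, rfl, by simp⟩
      apply disc_dropLast_eq2 P hP
      omega
  · have hr0 : chainDisc (P ++ a :: Q)
        = chainDisc P * chainDisc (a :: Q) - chainDisc P.dropLast * chainDisc Q := by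
      rw [disc_append P (a :: Q) hP0 (by simp)]
      rfl
    have hrq := disc_cons a Q hQ0
    obtain ⟨hp1, _⟩ := disc_ge P hP
    obtain ⟨hq1, hq2⟩ := disc_ge Q hQ
    have hq2' := hq2 hQ0
    have hp2' := disc_dropLast_le P hP0 hP
    have hr : chainDisc (P ++ a :: Q)
        = a * chainDisc P * chainDisc Q - chainDisc P.dropLast * chainDisc Q
          - chainDisc P * chainDisc Q.tail := by
      rw [hr0, hrq]; ring
    set p := chainDisc P
    set q := chainDisc Q
    set u := chainDisc P.dropLast
    set v := chainDisc Q.tail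
    have t1 : 0 ≤ (a - 2) * (p * q) :=
      mul_nonneg (by omega) (mul_nonneg (by omega) (by omega))
    have t2 : 0 ≤ q * (p - u - 1) := mul_nonneg (by omega) (by omega)
    have t3 : 0 ≤ p * (q - v - 1) := mul_nonneg (by omega) (by omega)
    constructor
    · nlinarith [t1, t2, t3]
    · intro he
      have hpq : 1 ≤ p * q := by nlinarith
      have ha2 : a ≤ 2 := by nlinarith [t2, t3, hpq]
      have haa : a = 2 := le_antisymm ha2 ha
      subst haa
      have e0 : q * (p - u - 1) = 0 := by linarith [t2, t3]
      have e1 : p * (q - v - 1) = 0 := by linarith [t2, t3]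
      have hu : p = u + 1 := by
        by_contra hc
        have h1' : 1 ≤ p - u - 1 := by omega
        have := mul_le_mul_of_nonneg_left h1' (by omega : (0 : ℤ) ≤ q)
        simp only [mul_one] at this
        omega
      have hv : q = v + 1 := by
        by_contra hc
        have h1' : 1 ≤ q - v - 1 := by omega
        have := mul_le_mul_of_nonneg_left h1' (by omega : (0 : ℤ) ≤ p)
        simp only [mul_one] at this
        omega
      exact ⟨disc_dropLast_eq2 P hP (by omega), rfl, disc_tail_eq2 Q hQ (by omega)⟩

/-! ### Main theorem -/

/-- **Admissible chains are log terminal, and canonical exactly for `(−2)`-chains.**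
If `T` is a nonempty list of integers `≥ 2`, then `0 < ld_j(T) ≤ 1` for every
`1 ≤ j ≤ n`; moreover `ld_j(T) = 1` for some such `j` if and only if all entries of `T`
equal `2`, in which case `ld_j(T) = 1` for every `1 ≤ j ≤ n`. -/
theorem chainLd_pos_le_one (T : List ℤ) (hT : T ≠ []) (h : ∀ a ∈ T, 2 ≤ a) :
    (∀ j, 1 ≤ j → j ≤ T.length → 0 < chainLd T j ∧ chainLd T j ≤ 1) ∧
    ((∃ j, 1 ≤ j ∧ j ≤ T.length ∧ chainLd T j = 1) ↔ ∀ a ∈ T, a = 2) ∧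
    ((∀ a ∈ T, a = 2) → ∀ j, 1 ≤ j → j ≤ T.length → chainLd T j = 1) := by
  -- splitting of T at position j
  have hsplit : ∀ j, 1 ≤ j → j ≤ T.length →
      ∃ (hj : j - 1 < T.length), T = T.take (j - 1) ++ T[j - 1] :: T.drop j := by
    intro j h1 h2
    have hj : j - 1 < T.length := by omega
    refine ⟨hj, ?_⟩
    have hd : T.drop (j - 1) = T[j - 1] :: T.drop j := by
      have hj1 : j - 1 + 1 = j := by omega
      rw [List.drop_eq_getElem_cons hj, hj1]
    conv_lhs => rw [← List.take_append_drop (j - 1) T]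
    rw [hd]
  have key : ∀ j, 1 ≤ j → j ≤ T.length →
      (1 ≤ chainDisc (T.take (j - 1)) ∧ 1 ≤ chainDisc (T.drop j) ∧
       chainDisc (T.take (j - 1)) + chainDisc (T.drop j) ≤ chainDisc T ∧
       (chainDisc T = chainDisc (T.take (j - 1)) + chainDisc (T.drop j) →
         ∀ a ∈ T, a = 2)) := by
    intro j h1 h2
    obtain ⟨hj, hs⟩ := hsplit j h1 h2
    have hPm : ∀ x ∈ T.take (j - 1), 2 ≤ x := fun x hx => h x (List.take_subset _ _ hx)
    have hQm : ∀ x ∈ T.drop j, 2 ≤ x := fun x hx => h x (List.drop_subset _ _ hx)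
    have ha : 2 ≤ T[j - 1] := h _ (List.getElem_mem hj)
    obtain ⟨hle, heq⟩ := disc_split (T.take (j - 1)) (T.drop j) (T[j - 1]) hPm hQm ha
    obtain ⟨hp1, _⟩ := disc_ge (T.take (j - 1)) hPm
    obtain ⟨hq1, _⟩ := disc_ge (T.drop j) hQm
    refine ⟨hp1, hq1, ?_, ?_⟩
    · have hTeq : chainDisc T = chainDisc (T.take (j - 1) ++ T[j - 1] :: T.drop j) := by
        conv_lhs => rw [hs]
      rw [hTeq]
      exact hle
    · intro he
      have he' : chainDisc (T.take (j - 1) ++ T[j - 1] :: T.drop j)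
          = chainDisc (T.take (j - 1)) + chainDisc (T.drop j) := by
        rw [← hs]
        exact he
      obtain ⟨e1, e2, e3⟩ := heq he'
      intro x hx
      rw [hs] at hx
      rcases List.mem_append.mp hx with hx | hx
      · exact e1 x hx
      · rcases List.mem_cons.mp hx with rfl | hx
        · exact e2
        · exact e3 x hx
  have hdTpos : 0 < chainDisc T := by
    obtain ⟨h1, _⟩ := disc_ge T h
    omega
  have hdTQ : (0 : ℚ) < (chainDisc T : ℚ) := by exact_mod_cast hdTpos
  -- positivity and ≤ 1
  have part1 : ∀ j, 1 ≤ j → j ≤ T.length → 0 < chainLd T j ∧ chainLd T j ≤ 1 := by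
    intro j h1 h2
    obtain ⟨hp1, hq1, hle, _⟩ := key j h1 h2
    constructor
    · apply div_pos _ hdTQ
      have : (0 : ℤ) < chainDisc (T.take (j - 1)) + chainDisc (T.drop j) := by omega
      exact_mod_cast this
    · rw [chainLd, div_le_one hdTQ]
      exact_mod_cast hle
  -- all-2 case
  have part3 : (∀ a ∈ T, a = 2) → ∀ j, 1 ≤ j → j ≤ T.length → chainLd T j = 1 := by
    intro h2 j hj1 hj2
    have hP2 : ∀ x ∈ T.take (j - 1), x = 2 := fun x hx => h2 x (List.take_subset _ _ hx)
    have hQ2 : ∀ x ∈ T.drop j, x = 2 := fun x hx => h2 x (List.drop_subset _ _ hx)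
    have e1 : chainDisc (T.take (j - 1)) = (T.take (j - 1)).length + 1 := disc_all2 _ hP2
    have e2 : chainDisc (T.drop j) = (T.drop j).length + 1 := disc_all2 _ hQ2
    have e3 : chainDisc T = T.length + 1 := disc_all2 _ h2
    have l1 : (T.take (j - 1)).length = j - 1 := by
      rw [List.length_take]
      omega
    have l2 : (T.drop j).length = T.length - j := by
      rw [List.length_drop]
    have hsum : chainDisc (T.take (j - 1)) + chainDisc (T.drop j) = chainDisc T := by
      rw [e1, e2, e3, l1, l2]
      have c1 : ((j - 1 : ℕ) : ℤ) = (j : ℤ) - 1 := by omega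
      have c2 : ((T.length - j : ℕ) : ℤ) = (T.length : ℤ) - j := by omega
      rw [c1, c2]
      ring
    rw [chainLd, ← Int.cast_add, hsum, div_self (ne_of_gt hdTQ)]
  refine ⟨part1, ⟨?_, ?_⟩, part3⟩
  · rintro ⟨j, hj1, hj2, hld⟩
    obtain ⟨hp1, hq1, hle, heq⟩ := key j hj1 hj2
    apply heq
    rw [chainLd, div_eq_one_iff_eq (ne_of_gt hdTQ)] at hld
    have : (chainDisc (T.take (j - 1)) + chainDisc (T.drop j) : ℚ) = (chainDisc T : ℚ) := by
      linarith [hld]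
    exact_mod_cast this.symm
  · intro h2
    refine ⟨1, le_refl 1, ?_, part3 h2 1 le_rfl ?_⟩ <;>
      exact Nat.one_le_iff_ne_zero.mpr (by simpa [List.length_eq_zero_iff] using hT)
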